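/- Fix n ∈ ℕ and a field k of characteristic 2. Define N_1(n,k) to be the k-vector space with basis {e_α : α ∈ GF(2)^n \ {0}} and bracket: if |α| = |β| = 1 (parity of coordinate sum) then [e_α,e_β] = e_{α+β}; if |α| = 0 or |β| = 0 then [e_α,e_β] = (α·β) e_{α+β} where α·β ∈ GF(2) is the standard inner product; and [e_α,e_α] = 0. Then this bracket satisfies the Jacobi identity, so N_1(n,k) is a Lie algebra. -/

import Mathlib

/-- Parity `|α|` of the coordinate sum of `α ∈ GF(2)^n`. -/
def par {n : ℕ} (α : Fin n → ZMod 2) : ZMod 2 := ∑ i, α i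

/-- Standard inner product `(α, β)` on `GF(2)^n`. -/
def dotp {n : ℕ} (α β : Fin n → ZMod 2) : ZMod 2 := ∑ i, α i * β i

/-- Structure constant of `N₁(n,k)` on `e_{α+β}`: equal to `1` if `|α| = |β| = 1`,
and to `(α,β)` if `|α| = 0` or `|β| = 0`. -/
noncomputable def cN1 (k : Type*) [Field k] {n : ℕ} (α β : Fin n → ZMod 2) : k :=
  if par α = 1 ∧ par β = 1 then 1 else if dotp α β = 1 then 1 else 0

/-- The bracket of `N₁(n,k)`, defined on the free `k`-module with basis
`{e_α : α ∈ GF(2)^n \ {0}}` (realized as finitely supported functions), extended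
bilinearly from `⁅e_α, e_β⁆ = cN1 α β • e_{α+β}` (and `0` when `α + β = 0`). -/
noncomputable def brN1 {k : Type*} [Field k] {n : ℕ}
    (f g : {v : Fin n → ZMod 2 // v ≠ 0} →₀ k) :
    {v : Fin n → ZMod 2 // v ≠ 0} →₀ k :=
  f.sum fun α a => g.sum fun β b =>
    if h : α.1 + β.1 ≠ 0 then
      Finsupp.single ⟨α.1 + β.1, h⟩ (a * b * cN1 k α.1 β.1)
    else 0

/-- The basis vector `e_α` of `N₁(n,k)`. -/
noncomputable def eN1 (k : Type*) [Field k] {n : ℕ} (α : Fin n → ZMod 2) (h : α ≠ 0) :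
    {v : Fin n → ZMod 2 // v ≠ 0} →₀ k :=
  Finsupp.single ⟨α, h⟩ 1

section Aux
variable {k : Type*} [Field k] {n : ℕ}

/-- ZMod 2 version of the structure constant. -/
def c2 (p q d : ZMod 2) : ZMod 2 := if p = 1 ∧ q = 1 then 1 else d

lemma c2_jac (pA pB pC dAB dBC dAC : ZMod 2) :
    c2 pB pC dBC * c2 pA (pB + pC) (dAB + dAC)
      + c2 pC pA dAC * c2 pB (pC + pA) (dBC + dAB)
      + c2 pA pB dAB * c2 pC (pA + pB) (dAC + dBC) = 0 := by
  revert pA pB pC dAB dBC dAC; decide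

lemma par_add (α β : Fin n → ZMod 2) : par (α + β) = par α + par β := by
  simp [par, Finset.sum_add_distrib]

lemma dotp_add_right (α β γ : Fin n → ZMod 2) :
    dotp α (β + γ) = dotp α β + dotp α γ := by
  simp [dotp, mul_add, Finset.sum_add_distrib]

lemma dotp_comm (α β : Fin n → ZMod 2) : dotp α β = dotp β α := by
  simp [dotp, mul_comm]

lemma cN1_eq_cast [CharP k 2] (α β : Fin n → ZMod 2) :
    cN1 k α β = ZMod.castHom (dvd_refl 2) k (c2 (par α) (par β) (dotp α β)) := by
  unfold cN1 c2
  split_ifs with h1 h2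
  · simp
  · simp [h2]
  · have : dotp α β = 0 := by
      have : ∀ d : ZMod 2, d ≠ 1 → d = 0 := by decide
      exact this _ h2
    simp [this]

lemma cN1_symm (α β : Fin n → ZMod 2) : cN1 k α β = cN1 k β α := by
  unfold cN1
  rw [dotp_comm]
  exact if_congr and_comm rfl rfl

lemma cN1_jac [CharP k 2] (A B C : Fin n → ZMod 2) :
    cN1 k B C * cN1 k A (B + C) + cN1 k C A * cN1 k B (C + A)
      + cN1 k A B * cN1 k C (A + B) = 0 := by
  rw [cN1_eq_cast, cN1_eq_cast, cN1_eq_cast, cN1_eq_cast, cN1_eq_cast, cN1_eq_cast,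
    par_add, par_add, par_add, dotp_add_right, dotp_add_right, dotp_add_right,
    dotp_comm C A, dotp_comm B A, dotp_comm C B,
    ← map_mul, ← map_mul, ← map_mul, ← map_add, ← map_add, c2_jac, map_zero]

end Aux

section Br
variable {k : Type*} [Field k] {n : ℕ}

local notation "V" => Fin n → ZMod 2
local notation "S" => {v : Fin n → ZMod 2 // v ≠ 0}
local notation "M" => ({v : Fin n → ZMod 2 // v ≠ 0} →₀ k)

lemma dite_single_congr {x y : Fin n → ZMod 2} (hxy : x = y) {r s : k} (hrs : r = s) :
    (if h : x ≠ 0 then Finsupp.single (⟨x, h⟩ : S) r else 0)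
      = (if h : y ≠ 0 then Finsupp.single (⟨y, h⟩ : S) s else 0) := by
  subst hxy; subst hrs; rfl

lemma V_add_self (v : Fin n → ZMod 2) : v + v = 0 :=
  funext fun i => CharTwo.add_self_eq_zero (v i)

lemma V_eq_of_add_eq_zero {v w : Fin n → ZMod 2} (h : v + w = 0) : v = w := by
  have : (v + w) + w = w := by rw [h, zero_add]
  rwa [add_assoc, V_add_self, add_zero] at this

lemma M_add_self [CharP k 2] (x : M) : x + x = 0 := by
  rw [← two_smul k x, show (2 : k) = 0 by exact_mod_cast CharP.cast_eq_zero k 2, zero_smul]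

lemma k_add_self [CharP k 2] (x : k) : x + x = 0 := CharTwo.add_self_eq_zero x

lemma brN1_zero_left (g : M) : brN1 0 g = 0 := Finsupp.sum_zero_index

lemma brN1_zero_right (f : M) : brN1 f 0 = 0 := by
  unfold brN1
  simp [Finsupp.sum_zero_index]

lemma brN1_single_single (α β : S) (a b : k) :
    brN1 (Finsupp.single α a) (Finsupp.single β b)
      = if h : α.1 + β.1 ≠ 0 then Finsupp.single (⟨α.1 + β.1, h⟩ : S) (a * b * cN1 k α.1 β.1)
        else 0 := by
  unfold brN1
  rw [Finsupp.sum_single_index, Finsupp.sum_single_index]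
  · simp
  · simp

lemma brN1_add_left (f g h : M) : brN1 (f + g) h = brN1 f h + brN1 g h := by
  unfold brN1
  apply Finsupp.sum_add_index'
  · intro α; simp
  · intro α a1 a2
    rw [← Finsupp.sum_add]
    apply Finsupp.sum_congr
    intro β _
    split_ifs with hh
    · rw [add_mul, add_mul, Finsupp.single_add]
    · rw [add_zero]

lemma brN1_add_right (f g h : M) : brN1 f (g + h) = brN1 f g + brN1 f h := by
  unfold brN1
  rw [← Finsupp.sum_add]
  apply Finsupp.sum_congr
  intro α _
  apply Finsupp.sum_add_index'
  · intro β; simp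
  · intro β b1 b2
    split_ifs with hh
    · rw [mul_add, add_mul, Finsupp.single_add]
    · rw [add_zero]

lemma brN1_smul_left (r : k) (f g : M) : brN1 (r • f) g = r • brN1 f g := by
  unfold brN1
  rw [Finsupp.sum_smul_index, Finsupp.smul_sum]
  · apply Finsupp.sum_congr
    intro α _
    rw [Finsupp.smul_sum]
    apply Finsupp.sum_congr
    intro β _
    split_ifs with hh
    · rw [Finsupp.smul_single, smul_eq_mul]
      congr 1
      ring
    · rw [smul_zero]
  · intro α; simp

lemma brN1_smul_right (r : k) (f g : M) : brN1 f (r • g) = r • brN1 f g := by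
  unfold brN1
  rw [Finsupp.smul_sum]
  apply Finsupp.sum_congr
  intro α _
  rw [Finsupp.sum_smul_index, Finsupp.smul_sum]
  · apply Finsupp.sum_congr
    intro β _
    split_ifs with hh
    · rw [Finsupp.smul_single, smul_eq_mul]
      congr 1
      ring
    · rw [smul_zero]
  · intro β; simp

lemma brN1_comm (f g : M) : brN1 f g = brN1 g f := by
  unfold brN1
  rw [Finsupp.sum_comm]
  apply Finsupp.sum_congr
  intro β _
  apply Finsupp.sum_congr
  intro α _
  exact dite_single_congr (add_comm _ _) (by rw [cN1_symm]; ring)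

lemma brN1_self [CharP k 2] (f : M) : brN1 f f = 0 := by
  induction f using Finsupp.induction_linear with
  | zero => exact brN1_zero_left 0
  | add f g hf hg =>
    rw [brN1_add_left, brN1_add_right, brN1_add_right, hf, hg, zero_add, add_zero,
      brN1_comm g f, M_add_self]
  | single α a =>
    rw [brN1_single_single, dif_neg]
    simp [V_add_self]
end Br

section Jac
variable {k : Type*} [Field k] {n : ℕ}

local notation "S" => {v : Fin n → ZMod 2 // v ≠ 0}
local notation "M" => ({v : Fin n → ZMod 2 // v ≠ 0} →₀ k)

lemma brN1_step (α β γ : S) (a b c : k) :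
    brN1 (Finsupp.single α a) (brN1 (Finsupp.single β b) (Finsupp.single γ c))
      = if h1 : β.1 + γ.1 ≠ 0 then
          (if h2 : α.1 + (β.1 + γ.1) ≠ 0 then
            Finsupp.single (⟨α.1 + (β.1 + γ.1), h2⟩ : S)
              (a * (b * c * cN1 k β.1 γ.1) * cN1 k α.1 (β.1 + γ.1))
          else 0)
        else 0 := by
  rw [brN1_single_single]
  by_cases h1 : β.1 + γ.1 ≠ 0
  · rw [dif_pos h1, dif_pos h1]
    exact brN1_single_single _ _ _ _
  · rw [dif_neg h1, dif_neg h1]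
    exact brN1_zero_right _

lemma step_congr {x y u : Fin n → ZMod 2} (hxy : x = y) {r s : k} (hrs : r = s) :
    (if h1 : x ≠ 0 then
      (if h2 : u + x ≠ 0 then Finsupp.single (⟨u + x, h2⟩ : S) r else 0) else 0)
      = (if h1 : y ≠ 0 then
      (if h2 : u + y ≠ 0 then Finsupp.single (⟨u + y, h2⟩ : S) s else 0) else 0) := by
  subst hxy; subst hrs; rfl

lemma jac_single [CharP k 2] (α β γ : S) (a b c : k) :
    brN1 (Finsupp.single α a) (brN1 (Finsupp.single β b) (Finsupp.single γ c))
      + brN1 (Finsupp.single β b) (brN1 (Finsupp.single γ c) (Finsupp.single α a))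
      + brN1 (Finsupp.single γ c) (brN1 (Finsupp.single α a) (Finsupp.single β b)) = 0 := by
  rw [brN1_step, brN1_step, brN1_step]
  by_cases hbc : β = γ
  · subst hbc
    rw [dif_neg (show ¬(β.1 + β.1 ≠ 0) by simp [V_add_self]), zero_add]
    rw [step_congr (u := β.1) (add_comm β.1 α.1)
      (show b * (c * a * cN1 k β.1 α.1) * cN1 k β.1 (β.1 + α.1)
          = c * (a * b * cN1 k α.1 β.1) * cN1 k β.1 (α.1 + β.1) by
        rw [cN1_symm β.1 α.1, add_comm β.1 α.1]; ring)]
    exact M_add_self _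
  by_cases hca : γ = α
  · subst hca
    rw [dif_neg (show ¬(γ.1 + γ.1 ≠ 0) by simp [V_add_self]), add_zero]
    rw [step_congr (u := γ.1) (add_comm γ.1 β.1)
      (show c * (a * b * cN1 k γ.1 β.1) * cN1 k γ.1 (γ.1 + β.1)
          = a * (b * c * cN1 k β.1 γ.1) * cN1 k γ.1 (β.1 + γ.1) by
        rw [cN1_symm γ.1 β.1, add_comm γ.1 β.1]; ring)]
    exact M_add_self _
  by_cases hab : α = β
  · subst hab
    rw [dif_neg (show ¬(α.1 + α.1 ≠ 0) by simp [V_add_self]), add_zero]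
    rw [step_congr (u := α.1) (add_comm γ.1 α.1)
      (show b * (c * a * cN1 k γ.1 α.1) * cN1 k α.1 (γ.1 + α.1)
          = a * (b * c * cN1 k α.1 γ.1) * cN1 k α.1 (α.1 + γ.1) by
        rw [cN1_symm γ.1 α.1, add_comm γ.1 α.1]; ring)]
    exact M_add_self _
  -- all distinct
  have h1 : β.1 + γ.1 ≠ 0 := fun h => hbc (Subtype.ext (V_eq_of_add_eq_zero h))
  have h2 : γ.1 + α.1 ≠ 0 := fun h => hca (Subtype.ext (V_eq_of_add_eq_zero h))
  have h3 : α.1 + β.1 ≠ 0 := fun h => hab (Subtype.ext (V_eq_of_add_eq_zero h))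
  rw [dif_pos h1, dif_pos h2, dif_pos h3]
  have e2 : β.1 + (γ.1 + α.1) = α.1 + (β.1 + γ.1) := by ring
  have e3 : γ.1 + (α.1 + β.1) = α.1 + (β.1 + γ.1) := by ring
  by_cases hσ : α.1 + (β.1 + γ.1) = 0
  · rw [dif_neg (by rw [hσ]; simp), dif_neg (by rw [e2, hσ]; simp),
      dif_neg (by rw [e3, hσ]; simp)]
    simp
  · rw [dif_pos hσ, dif_pos (show β.1 + (γ.1 + α.1) ≠ 0 by rw [e2]; exact hσ),
      dif_pos (show γ.1 + (α.1 + β.1) ≠ 0 by rw [e3]; exact hσ)]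
    have key : ∀ (x : Fin n → ZMod 2) (hx : x ≠ 0) (r : k), x = α.1 + (β.1 + γ.1) →
        Finsupp.single (⟨x, hx⟩ : S) r
          = Finsupp.single (⟨α.1 + (β.1 + γ.1), hσ⟩ : S) r := by
      intro x hx r hxe
      congr 1
      exact Subtype.ext hxe
    rw [key _ _ _ e2, key _ _ _ e3, ← Finsupp.single_add, ← Finsupp.single_add]
    have hco : a * (b * c * cN1 k β.1 γ.1) * cN1 k α.1 (β.1 + γ.1)
        + b * (c * a * cN1 k γ.1 α.1) * cN1 k β.1 (γ.1 + α.1)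
        + c * (a * b * cN1 k α.1 β.1) * cN1 k γ.1 (α.1 + β.1)
        = a * b * c * (cN1 k β.1 γ.1 * cN1 k α.1 (β.1 + γ.1)
            + cN1 k γ.1 α.1 * cN1 k β.1 (γ.1 + α.1)
            + cN1 k α.1 β.1 * cN1 k γ.1 (α.1 + β.1)) := by ring
    rw [hco, cN1_jac, mul_zero, Finsupp.single_zero]
end Jac

/-- The bracket of `N₁(n,k)` is alternating, symmetric
(`= -` antisymmetric in characteristic 2), bilinear, and satisfies the Jacobi
identity; hence `N₁(n,k)` is a Lie algebra. -/
theorem N1_is_lie_algebra {n : ℕ} {k : Type*} [Field k] (hchar : CharP k 2) :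
    (∀ f : {v : Fin n → ZMod 2 // v ≠ 0} →₀ k, brN1 f f = 0) ∧
    (∀ f g : {v : Fin n → ZMod 2 // v ≠ 0} →₀ k, brN1 f g = brN1 g f) ∧
    (∀ f g h : {v : Fin n → ZMod 2 // v ≠ 0} →₀ k,
      brN1 (f + g) h = brN1 f h + brN1 g h) ∧
    (∀ f g h : {v : Fin n → ZMod 2 // v ≠ 0} →₀ k,
      brN1 f (g + h) = brN1 f g + brN1 f h) ∧
    (∀ (a : k) (f g : {v : Fin n → ZMod 2 // v ≠ 0} →₀ k),
      brN1 (a • f) g = a • brN1 f g ∧ brN1 f (a • g) = a • brN1 f g) ∧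
    (∀ f g h : {v : Fin n → ZMod 2 // v ≠ 0} →₀ k,
      brN1 f (brN1 g h) + brN1 g (brN1 h f) + brN1 h (brN1 f g) = 0) := by
  haveI := hchar
  refine ⟨fun f => brN1_self f, fun f g => brN1_comm f g,
    fun f g h => brN1_add_left f g h, fun f g h => brN1_add_right f g h,
    fun a f g => ⟨brN1_smul_left a f g, brN1_smul_right a f g⟩, ?_⟩
  intro f g h
  induction f using Finsupp.induction_linear with
  | zero =>
    simp [brN1_zero_left, brN1_zero_right]
  | add f1 f2 ih1 ih2 =>
    rw [brN1_add_left, brN1_add_right, brN1_add_right, brN1_add_left, brN1_add_right]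
    calc brN1 f1 (brN1 g h) + brN1 f2 (brN1 g h)
          + (brN1 g (brN1 h f1) + brN1 g (brN1 h f2))
          + (brN1 h (brN1 f1 g) + brN1 h (brN1 f2 g))
        = (brN1 f1 (brN1 g h) + brN1 g (brN1 h f1) + brN1 h (brN1 f1 g))
          + (brN1 f2 (brN1 g h) + brN1 g (brN1 h f2) + brN1 h (brN1 f2 g)) := by abel
      _ = 0 := by rw [ih1, ih2, add_zero]
  | single α a =>
    induction g using Finsupp.induction_linear with
    | zero =>
      simp [brN1_zero_left, brN1_zero_right]
    | add g1 g2 ih1 ih2 =>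
      rw [brN1_add_left, brN1_add_right, brN1_add_left, brN1_add_right, brN1_add_right]
      calc brN1 (Finsupp.single α a) (brN1 g1 h) + brN1 (Finsupp.single α a) (brN1 g2 h)
            + (brN1 g1 (brN1 h (Finsupp.single α a)) + brN1 g2 (brN1 h (Finsupp.single α a)))
            + (brN1 h (brN1 (Finsupp.single α a) g1) + brN1 h (brN1 (Finsupp.single α a) g2))
          = (brN1 (Finsupp.single α a) (brN1 g1 h) + brN1 g1 (brN1 h (Finsupp.single α a))
              + brN1 h (brN1 (Finsupp.single α a) g1))
            + (brN1 (Finsupp.single α a) (brN1 g2 h) + brN1 g2 (brN1 h (Finsupp.single α a))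
              + brN1 h (brN1 (Finsupp.single α a) g2)) := by abel
        _ = 0 := by rw [ih1, ih2, add_zero]
    | single β b =>
      induction h using Finsupp.induction_linear with
      | zero =>
        simp [brN1_zero_left, brN1_zero_right]
      | add h1 h2 ih1 ih2 =>
        rw [brN1_add_right, brN1_add_right, brN1_add_left, brN1_add_left, brN1_add_right]
        calc brN1 (Finsupp.single α a) (brN1 (Finsupp.single β b) h1)
              + brN1 (Finsupp.single α a) (brN1 (Finsupp.single β b) h2)
              + (brN1 (Finsupp.single β b) (brN1 h1 (Finsupp.single α a))
                + brN1 (Finsupp.single β b) (brN1 h2 (Finsupp.single α a)))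
              + (brN1 h1 (brN1 (Finsupp.single α a) (Finsupp.single β b))
                + brN1 h2 (brN1 (Finsupp.single α a) (Finsupp.single β b)))
            = (brN1 (Finsupp.single α a) (brN1 (Finsupp.single β b) h1)
                + brN1 (Finsupp.single β b) (brN1 h1 (Finsupp.single α a))
                + brN1 h1 (brN1 (Finsupp.single α a) (Finsupp.single β b)))
              + (brN1 (Finsupp.single α a) (brN1 (Finsupp.single β b) h2)
                + brN1 (Finsupp.single β b) (brN1 h2 (Finsupp.single α a))
                + brN1 h2 (brN1 (Finsupp.single α a) (Finsupp.single β b))) := by abel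
          _ = 0 := by rw [ih1, ih2, add_zero]
      | single γ c => exact jac_single α β γ a b c
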